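/- Let C be a semidualizing (S,R)-bimodule and (M, N) a duality pair over R. Then the functor C ⊗_R − restricts to an equivalence of categories from A_C(R) ∩ M to M^C(S), with quasi-inverse Hom_S(C, −); similarly − ⊗_S C restricts to an equivalence from N^C(S^op) to B_C(R^op) ∩ N with quasi-inverse Hom_{R^op}(C, −). -/

import Mathlib

set_option linter.unusedVariables false
set_option linter.unusedSectionVars false

open MulOpposite CategoryTheory

open MulOpposite

noncomputable section

section BT
variable (R : Type) [Ring R] (M : Type) [AddCommGroup M] [Module Rᵐᵒᵖ M]
  (N : Type) [AddCommGroup N] [Module R N]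

def btRel : Submodule ℤ (TensorProduct ℤ M N) :=
  Submodule.span ℤ {x | ∃ (m : M) (r : R) (n : N),
    x = (op r • m) ⊗ₜ[ℤ] n - m ⊗ₜ[ℤ] (r • n)}

def BT : Type := TensorProduct ℤ M N ⧸ btRel R M N

instance : AddCommGroup (BT R M N) :=
  inferInstanceAs (AddCommGroup (TensorProduct ℤ M N ⧸ btRel R M N))

variable {M N}

def BT.mk (m : M) (n : N) : BT R M N :=
  Submodule.Quotient.mk (m ⊗ₜ[ℤ] n)

variable {R}

theorem BT.mk_rel (m : M) (r : R) (n : N) : BT.mk R (op r • m) n = BT.mk R m (r • n) := by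
  exact (Submodule.Quotient.eq (btRel R M N)).2 (Submodule.subset_span ⟨m, r, n, rfl⟩)

theorem BT.mk_add_left (m m' : M) (n : N) :
    BT.mk R (m + m') n = BT.mk R m n + BT.mk R m' n := by
  unfold BT.mk; rw [TensorProduct.add_tmul]; exact Submodule.Quotient.mk_add _

theorem BT.mk_add_right (m : M) (n n' : N) :
    BT.mk R m (n + n') = BT.mk R m n + BT.mk R m n' := by
  unfold BT.mk; rw [TensorProduct.tmul_add]; exact Submodule.Quotient.mk_add _

theorem BT.mk_zero_left (n : N) : BT.mk R (0 : M) n = 0 := by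
  rw [BT.mk, TensorProduct.zero_tmul]; rfl

theorem BT.mk_zero_right (m : M) : BT.mk R m (0 : N) = 0 := by
  rw [BT.mk, TensorProduct.tmul_zero]; rfl

theorem BT.ind {P : BT R M N → Prop} (h0 : P 0) (hmk : ∀ m n, P (BT.mk R m n))
    (hadd : ∀ x y, P x → P y → P (x + y)) : ∀ x, P x := by
  intro x
  obtain ⟨y, rfl⟩ := Submodule.Quotient.mk_surjective (btRel R M N) x
  induction y using TensorProduct.induction_on with
  | zero => exact h0
  | tmul m n => exact hmk m n
  | add a b ha hb => rw [Submodule.Quotient.mk_add]; exact hadd _ _ ha hb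

theorem BT.hom_ext {X : Type} [AddCommGroup X] {f g : BT R M N →ₗ[ℤ] X}
    (h : ∀ m n, f (BT.mk R m n) = g (BT.mk R m n)) : f = g :=
  LinearMap.ext fun x => BT.ind (P := fun y => f y = g y) (by simp) h
    (fun a b ha hb => by
      show f (a + b) = g (a + b)
      rw [map_add, map_add]
      exact congrArg₂ (· + ·) ha hb) x

/-- Functoriality of the balanced tensor product in the right variable. -/
def BT.map (R : Type) [Ring R] {M : Type} [AddCommGroup M] [Module Rᵐᵒᵖ M]
    {N N' : Type} [AddCommGroup N] [Module R N] [AddCommGroup N'] [Module R N']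
    (f : N →ₗ[R] N') : BT R M N →ₗ[ℤ] BT R M N' := by
  refine Submodule.mapQ _ _
    (TensorProduct.map LinearMap.id f.toAddMonoidHom.toIntLinearMap) ?_
  rw [btRel, Submodule.span_le]
  rintro x ⟨m, r, n, rfl⟩
  have e : TensorProduct.map LinearMap.id f.toAddMonoidHom.toIntLinearMap ((op r • m) ⊗ₜ[ℤ] n - m ⊗ₜ[ℤ] (r • n)) =
      (op r • m) ⊗ₜ[ℤ] f n - m ⊗ₜ[ℤ] (r • f n) := by
    simp [smul_comm]
  exact (congrArg (· ∈ btRel R M N') e).mpr (Submodule.subset_span ⟨m, r, f n, rfl⟩)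

@[simp] theorem BT.map_mk (R : Type) [Ring R] {M : Type} [AddCommGroup M] [Module Rᵐᵒᵖ M]
    {N N' : Type} [AddCommGroup N] [Module R N] [AddCommGroup N'] [Module R N']
    (f : N →ₗ[R] N') (m : M) (n : N) : BT.map R f (BT.mk R m n) = BT.mk R m (f n) := rfl

section lsmul
variable (T : Type) [Ring T] [Module T M] [SMulCommClass T Rᵐᵒᵖ M]

/-- action of an auxiliary ring `T` on `M ⊗_R N` through the left factor. -/
def BT.lsmul (t : T) : BT R M N →ₗ[ℤ] BT R M N := by
  refine Submodule.mapQ _ _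
    (TensorProduct.map (DistribMulAction.toAddMonoidHom M t).toIntLinearMap LinearMap.id) ?_
  rw [btRel, Submodule.span_le]
  rintro x ⟨m, r, n, rfl⟩
  have e : TensorProduct.map (DistribMulAction.toAddMonoidHom M t).toIntLinearMap LinearMap.id ((op r • m) ⊗ₜ[ℤ] n - m ⊗ₜ[ℤ] (r • n)) =
      (op r • t • m) ⊗ₜ[ℤ] n - (t • m) ⊗ₜ[ℤ] (r • n) := by
    simp [smul_comm]
  exact (congrArg (· ∈ btRel R M N) e).mpr (Submodule.subset_span ⟨t • m, r, n, rfl⟩)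

@[simp] theorem BT.lsmul_mk (t : T) (m : M) (n : N) :
    BT.lsmul T t (BT.mk R m n) = BT.mk R (t • m) n := rfl

theorem BT.lsmul_one : BT.lsmul (R := R) (M := M) (N := N) T 1 = LinearMap.id :=
  BT.hom_ext fun m n => by simp

theorem BT.lsmul_mul (t t' : T) :
    BT.lsmul (R := R) (M := M) (N := N) T (t * t') = (BT.lsmul T t).comp (BT.lsmul T t') :=
  BT.hom_ext fun m n => by simp [mul_smul]

theorem BT.lsmul_add (t t' : T) :
    BT.lsmul (R := R) (M := M) (N := N) T (t + t') = BT.lsmul T t + BT.lsmul T t' :=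
  BT.hom_ext fun m n => by simp [add_smul, BT.mk_add_left]

theorem BT.lsmul_zero : BT.lsmul (R := R) (M := M) (N := N) T 0 = 0 :=
  BT.hom_ext fun m n => by simp [BT.mk_zero_left]

/-- The left auxiliary module structure on the balanced tensor product. -/
instance (priority := 100) BT.instLModule : Module T (BT R M N) where
  smul t x := BT.lsmul T t x
  one_smul x := by show BT.lsmul T 1 x = x; rw [BT.lsmul_one]; rfl
  mul_smul t t' x := by
    show BT.lsmul T (t * t') x = BT.lsmul T t (BT.lsmul T t' x)
    rw [BT.lsmul_mul]; rfl
  smul_zero t := map_zero (BT.lsmul T t)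
  smul_add t x y := map_add (BT.lsmul T t) x y
  add_smul t t' x := by
    show BT.lsmul T (t + t') x = BT.lsmul T t x + BT.lsmul T t' x
    rw [BT.lsmul_add]; rfl
  zero_smul x := by show BT.lsmul T 0 x = 0; rw [BT.lsmul_zero]; rfl

theorem BT.smul_mk (t : T) (m : M) (n : N) :
    t • (BT.mk R m n) = BT.mk R (t • m) n := BT.lsmul_mk T t m n

end lsmul

section rsmul
variable (T : Type) [Ring T] [Module T N] [SMulCommClass T R N]

/-- action of an auxiliary ring `T` on `M ⊗_R N` through the right factor. -/
def BT.rsmul (t : T) : BT R M N →ₗ[ℤ] BT R M N := by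
  refine Submodule.mapQ _ _
    (TensorProduct.map LinearMap.id (DistribMulAction.toAddMonoidHom N t).toIntLinearMap) ?_
  rw [btRel, Submodule.span_le]
  rintro x ⟨m, r, n, rfl⟩
  have e : TensorProduct.map LinearMap.id (DistribMulAction.toAddMonoidHom N t).toIntLinearMap ((op r • m) ⊗ₜ[ℤ] n - m ⊗ₜ[ℤ] (r • n)) =
      (op r • m) ⊗ₜ[ℤ] (t • n) - m ⊗ₜ[ℤ] (r • t • n) := by
    simp [smul_comm]
  exact (congrArg (· ∈ btRel R M N) e).mpr (Submodule.subset_span ⟨m, r, t • n, rfl⟩)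

@[simp] theorem BT.rsmul_mk (t : T) (m : M) (n : N) :
    BT.rsmul T t (BT.mk R m n) = BT.mk R m (t • n) := rfl

theorem BT.rsmul_one : BT.rsmul (R := R) (M := M) (N := N) T 1 = LinearMap.id :=
  BT.hom_ext fun m n => by simp

theorem BT.rsmul_mul (t t' : T) :
    BT.rsmul (R := R) (M := M) (N := N) T (t * t') = (BT.rsmul T t).comp (BT.rsmul T t') :=
  BT.hom_ext fun m n => by simp [mul_smul]

theorem BT.rsmul_add (t t' : T) :
    BT.rsmul (R := R) (M := M) (N := N) T (t + t') = BT.rsmul T t + BT.rsmul T t' :=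
  BT.hom_ext fun m n => by simp [add_smul, BT.mk_add_right]

theorem BT.rsmul_zero : BT.rsmul (R := R) (M := M) (N := N) T 0 = 0 :=
  BT.hom_ext fun m n => by simp [BT.mk_zero_right]

/-- The right auxiliary module structure on the balanced tensor product. -/
instance (priority := 90) BT.instRModule : Module T (BT R M N) where
  smul t x := BT.rsmul T t x
  one_smul x := by show BT.rsmul T 1 x = x; rw [BT.rsmul_one]; rfl
  mul_smul t t' x := by
    show BT.rsmul T (t * t') x = BT.rsmul T t (BT.rsmul T t' x)
    rw [BT.rsmul_mul]; rfl
  smul_zero t := map_zero (BT.rsmul T t)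
  smul_add t x y := map_add (BT.rsmul T t) x y
  add_smul t t' x := by
    show BT.rsmul T (t + t') x = BT.rsmul T t x + BT.rsmul T t' x
    rw [BT.rsmul_add]; rfl
  zero_smul x := by show BT.rsmul T 0 x = 0; rw [BT.rsmul_zero]; rfl

theorem BT.smul_mk_right (t : T) (m : M) (n : N) :
    t • (BT.mk R m n) = BT.mk R m (t • n) := BT.rsmul_mk T t m n

end rsmul
end BT
end


noncomputable section

set_option linter.unusedSectionVars false

/-! ### Hom-module structures -/

section HomMod
variable (R S : Type) [Ring R] [Ring S]
variable (C : Type) [AddCommGroup C] [Module S C] [Module Rᵐᵒᵖ C] [SMulCommClass S Rᵐᵒᵖ C]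

/-- For an `(S,R)`-bimodule `C` and a left `S`-module `X`, the abelian group
`Hom_S(C,X)` is a left `R`-module via `(r • f) c = f (c • r)`. -/
instance homLeftModule (X : Type) [AddCommGroup X] [Module S X] :
    Module R (C →ₗ[S] X) where
  smul r f :=
    { toFun := fun c => f (op r • c)
      map_add' := fun c c' => by
        show f (op r • (c + c')) = f (op r • c) + f (op r • c')
        rw [smul_add, map_add]
      map_smul' := fun s c => by
        show f (op r • s • c) = s • f (op r • c)
        rw [← smul_comm s (op r) c, map_smul] }
  one_smul f := LinearMap.ext fun c => by
    show f (op (1 : R) • c) = f c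
    rw [op_one, one_smul]
  mul_smul r r' f := LinearMap.ext fun c => by
    show f (op (r * r') • c) = f (op r' • op r • c)
    rw [← mul_smul, ← op_mul]
  smul_add r f g := rfl
  smul_zero r := rfl
  add_smul r r' f := LinearMap.ext fun c => by
    show f (op (r + r') • c) = f (op r • c) + f (op r' • c)
    rw [← map_add, MulOpposite.op_add, add_smul]
  zero_smul f := LinearMap.ext fun c => by
    show f (op (0 : R) • c) = 0
    rw [op_zero, zero_smul, map_zero]

theorem homLeftModule_smul_apply (X : Type) [AddCommGroup X] [Module S X]
    (r : R) (f : C →ₗ[S] X) (c : C) : (r • f) c = f (op r • c) := rfl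

/-- For an `(S,R)`-bimodule `C` and a right `R`-module `Y`, the abelian group
`Hom_{Rᵒᵖ}(C,Y)` is a right `S`-module via `(f • s) c = f (s • c)`. -/
instance homRightModule (Y : Type) [AddCommGroup Y] [Module Rᵐᵒᵖ Y] :
    Module Sᵐᵒᵖ (C →ₗ[Rᵐᵒᵖ] Y) where
  smul s f :=
    { toFun := fun c => f (s.unop • c)
      map_add' := fun c c' => by
        show f (s.unop • (c + c')) = f (s.unop • c) + f (s.unop • c')
        rw [smul_add, map_add]
      map_smul' := fun r c => by
        show f (s.unop • r • c) = r • f (s.unop • c)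
        rw [smul_comm s.unop r c, map_smul] }
  one_smul f := LinearMap.ext fun c => by
    show f ((1 : Sᵐᵒᵖ).unop • c) = f c
    rw [unop_one, one_smul]
  mul_smul s s' f := LinearMap.ext fun c => by
    show f ((s * s').unop • c) = f (s'.unop • s.unop • c)
    rw [unop_mul, mul_smul]
  smul_add s f g := rfl
  smul_zero s := rfl
  add_smul s s' f := LinearMap.ext fun c => by
    show f ((s + s').unop • c) = f (s.unop • c) + f (s'.unop • c)
    rw [← map_add, MulOpposite.unop_add, add_smul]
  zero_smul f := LinearMap.ext fun c => by
    show f ((0 : Sᵐᵒᵖ).unop • c) = 0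
    rw [unop_zero, zero_smul, map_zero]

theorem homRightModule_smul_apply (Y : Type) [AddCommGroup Y] [Module Rᵐᵒᵖ Y]
    (s : Sᵐᵒᵖ) (f : C →ₗ[Rᵐᵒᵖ] Y) (c : C) : (s • f) c = f (s.unop • c) := rfl

end HomMod

/-! ### Character modules of one-sided modules -/

section Char
variable (R : Type) [Ring R] (M : Type) [AddCommGroup M]

/-- The character module of a left module is a right module. -/
instance instCharRight [Module R M] : Module Rᵐᵒᵖ (CharacterModule M) where
  smul r f := f.comp (DistribMulAction.toAddMonoidHom M r.unop)
  one_smul f := DFunLike.ext _ _ fun a => by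
    show f ((1 : Rᵐᵒᵖ).unop • a) = f a
    rw [unop_one, one_smul]
  mul_smul r r' f := DFunLike.ext _ _ fun a => by
    show f ((r * r').unop • a) = f (r'.unop • r.unop • a)
    rw [unop_mul, mul_smul]
  smul_add r f g := rfl
  smul_zero r := rfl
  add_smul r r' f := DFunLike.ext _ _ fun a => by
    show f ((r + r').unop • a) = f (r.unop • a) + f (r'.unop • a)
    rw [← map_add, MulOpposite.unop_add, add_smul]
  zero_smul f := DFunLike.ext _ _ fun a => by
    show f ((0 : Rᵐᵒᵖ).unop • a) = 0
    rw [unop_zero, zero_smul, map_zero]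

theorem instCharRight_smul_apply [Module R M] (r : Rᵐᵒᵖ) (f : CharacterModule M) (a : M) :
    (r • f) a = f (r.unop • a) := rfl

/-- The character module of a right module is a left module. -/
instance instCharLeft [Module Rᵐᵒᵖ M] : Module R (CharacterModule M) where
  smul r f := f.comp (DistribMulAction.toAddMonoidHom M (op r))
  one_smul f := DFunLike.ext _ _ fun a => by
    show f (op (1 : R) • a) = f a
    rw [op_one, one_smul]
  mul_smul r r' f := DFunLike.ext _ _ fun a => by
    show f (op (r * r') • a) = f (op r' • op r • a)
    rw [← mul_smul, ← op_mul]
  smul_add r f g := rfl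
  smul_zero r := rfl
  add_smul r r' f := DFunLike.ext _ _ fun a => by
    show f (op (r + r') • a) = f (op r • a) + f (op r' • a)
    rw [← map_add, MulOpposite.op_add, add_smul]
  zero_smul f := DFunLike.ext _ _ fun a => by
    show f (op (0 : R) • a) = 0
    rw [op_zero, zero_smul, map_zero]

theorem instCharLeft_smul_apply [Module Rᵐᵒᵖ M] (r : R) (f : CharacterModule M) (a : M) :
    (r • f) a = f (op r • a) := rfl

end Char
end

noncomputable section
section TorExt

/-- Tensoring with a fixed right `R`-module `M`, as a functor on left `R`-modules. -/
def btF (R : Type) [Ring R] (M : Type) [AddCommGroup M] [Module Rᵐᵒᵖ M] :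
    ModuleCat.{0} R ⥤ AddCommGrpCat.{0} where
  obj N := AddCommGrpCat.of (BT R M N)
  map f := AddCommGrpCat.ofHom (BT.map R f.hom).toAddMonoidHom
  map_id N := by
    have h : BT.map (M := M) R (LinearMap.id : ↥N →ₗ[R] ↥N) = LinearMap.id :=
      BT.hom_ext fun m n => by simp
    ext x
    show BT.map (M := M) R (LinearMap.id : ↥N →ₗ[R] ↥N) x = x
    rw [h]; rfl
  map_comp {X Y Z} f g := by
    have h : BT.map (M := M) R (LinearMap.comp g.hom f.hom)
        = (BT.map R g.hom).comp (BT.map R f.hom) :=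
      BT.hom_ext fun m n => by simp
    ext x
    show BT.map (M := M) R (LinearMap.comp g.hom f.hom) x
      = BT.map R g.hom (BT.map R f.hom x)
    rw [h]; rfl

instance btF_additive (R : Type) [Ring R] (M : Type) [AddCommGroup M] [Module Rᵐᵒᵖ M] :
    (btF R M).Additive where
  map_add := by
    intro N N' f g
    have h : BT.map (M := M) R (f + g).hom
        = BT.map R f.hom + BT.map R g.hom :=
      BT.hom_ext fun m n => by
        rw [show BT.map R (f + g).hom (BT.mk R m n)
            = BT.mk R m (f.hom n + g.hom n) from rfl, BT.mk_add_right]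
        rfl
    ext x
    show BT.map (M := M) R (f + g).hom x
      = BT.map R f.hom x + BT.map R g.hom x
    rw [h]; rfl

/-- `Tor_i^R(M, N)` for a right `R`-module `M` and a left `R`-module `N`,
computed as the `i`-th left derived functor of `M ⊗_R -`. -/
def TorGrp (R : Type) [Ring R] (M : Type) [AddCommGroup M] [Module Rᵐᵒᵖ M]
    (N : Type) [AddCommGroup N] [Module R N] (i : ℕ) : Type :=
  ((btF R M).leftDerived i).obj (ModuleCat.of R N)

instance (R : Type) [Ring R] (M : Type) [AddCommGroup M] [Module Rᵐᵒᵖ M]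
    (N : Type) [AddCommGroup N] [Module R N] (i : ℕ) : AddCommGroup (TorGrp R M N i) :=
  inferInstanceAs (AddCommGroup ↑(((btF R M).leftDerived i).obj (ModuleCat.of R N)))

/-- `Ext^i_R(A, B)`, computed by deriving `Hom_R(-, B)` using projective resolutions. -/
def ExtGrp (R : Type) [Ring R] (A : Type) [AddCommGroup A] [Module R A]
    (B : Type) [AddCommGroup B] [Module R B] (i : ℕ) : Type :=
  ((Ext ℤ (ModuleCat.{0} R) i).obj (Opposite.op (ModuleCat.of R A))).obj (ModuleCat.of R B)

instance (R : Type) [Ring R] (A : Type) [AddCommGroup A] [Module R A]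
    (B : Type) [AddCommGroup B] [Module R B] (i : ℕ) : AddCommGroup (ExtGrp R A B i) :=
  inferInstanceAs (AddCommGroup
    ↑(((Ext ℤ (ModuleCat.{0} R) i).obj (Opposite.op (ModuleCat.of R A))).obj (ModuleCat.of R B)))

end TorExt

end

noncomputable section
section Semidualizing
variable (R S : Type) [Ring R] [Ring S]
variable (C : Type) [AddCommGroup C] [Module S C] [Module Rᵐᵒᵖ C]
  [SMulCommClass S Rᵐᵒᵖ C] [SMulCommClass Rᵐᵒᵖ S C]

/-- The natural map `A → Hom_S(C, C ⊗_R A)`. -/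
def muR (A : Type) [AddCommGroup A] [Module R A] : A → (C →ₗ[S] BT R C A) :=
  fun a =>
  { toFun := fun c => BT.mk R c a
    map_add' := fun c c' => BT.mk_add_left c c' a
    map_smul' := fun s c => (BT.smul_mk S s c a).symm }

/-- The auxiliary evaluation on the plain tensor product. -/
def nuSAux (X : Type) [AddCommGroup X] [Module S X] :
    TensorProduct ℤ C (C →ₗ[S] X) →ₗ[ℤ] X :=
  TensorProduct.lift (LinearMap.mk₂ ℤ (fun c (f : C →ₗ[S] X) => f c)
    (fun c c' f => map_add f c c')
    (fun z c f => map_zsmul f z c)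
    (fun c f g => rfl)
    (fun z c f => rfl))

/-- The natural evaluation map `C ⊗_R Hom_S(C, X) → X`. -/
def nuS (X : Type) [AddCommGroup X] [Module S X] : BT R C (C →ₗ[S] X) → X :=
  fun x => Submodule.liftQ (btRel R C (C →ₗ[S] X)) (nuSAux S C X) (by
    rw [btRel, Submodule.span_le]
    rintro y ⟨c, r, f, rfl⟩
    simp only [SetLike.mem_coe, LinearMap.mem_ker, map_sub]
    have h1 : nuSAux S C X ((op r • c) ⊗ₜ[ℤ] f) = f (op r • c) := rfl
    have h2 : nuSAux S C X (c ⊗ₜ[ℤ] (r • f)) = f (op r • c) := rfl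
    rw [h1, h2, sub_self]) x

/-- The natural map `Y → Hom_{Rᵒᵖ}(C, Y ⊗_S C)`. -/
def muOp (Y : Type) [AddCommGroup Y] [Module Sᵐᵒᵖ Y] : Y → (C →ₗ[Rᵐᵒᵖ] BT S Y C) :=
  fun y =>
  { toFun := fun c => BT.mk S y c
    map_add' := fun c c' => BT.mk_add_right y c c'
    map_smul' := fun r c => (BT.smul_mk_right Rᵐᵒᵖ r y c).symm }

/-- The auxiliary evaluation on the plain tensor product, opposite side. -/
def nuOpAux (B : Type) [AddCommGroup B] [Module Rᵐᵒᵖ B] :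
    TensorProduct ℤ (C →ₗ[Rᵐᵒᵖ] B) C →ₗ[ℤ] B :=
  TensorProduct.lift (LinearMap.mk₂ ℤ (fun (f : C →ₗ[Rᵐᵒᵖ] B) c => f c)
    (fun f g c => rfl)
    (fun z f c => rfl)
    (fun f c c' => map_add f c c')
    (fun z f c => map_zsmul f z c))

/-- The natural evaluation map `Hom_{Rᵒᵖ}(C, B) ⊗_S C → B`. -/
def nuOp (B : Type) [AddCommGroup B] [Module Rᵐᵒᵖ B] : BT S (C →ₗ[Rᵐᵒᵖ] B) C → B :=
  fun x => Submodule.liftQ (btRel S (C →ₗ[Rᵐᵒᵖ] B) C) (nuOpAux R C B) (by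
    rw [btRel, Submodule.span_le]
    rintro y ⟨f, s, c, rfl⟩
    simp only [SetLike.mem_coe, LinearMap.mem_ker, map_sub]
    have h1 : nuOpAux R C B ((op s • f) ⊗ₜ[ℤ] c) = f (s • c) := rfl
    have h2 : nuOpAux R C B (f ⊗ₜ[ℤ] (s • c)) = f (s • c) := rfl
    rw [h1, h2, sub_self]) x

/-- The Auslander class `A_C(R)`. -/
def AuslanderR (A : Type) [AddCommGroup A] [Module R A] : Prop :=
  (∀ i : ℕ, 1 ≤ i → Subsingleton (TorGrp R C A i)) ∧
  (∀ i : ℕ, 1 ≤ i → Subsingleton (ExtGrp S C (BT R C A) i)) ∧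
  Function.Bijective (muR R S C A)

/-- The Bass class `B_C(S)`. -/
def BassS (X : Type) [AddCommGroup X] [Module S X] : Prop :=
  (∀ i : ℕ, 1 ≤ i → Subsingleton (ExtGrp S C X i)) ∧
  (∀ i : ℕ, 1 ≤ i → Subsingleton (TorGrp R C (C →ₗ[S] X) i)) ∧
  Function.Bijective (nuS R S C X)

/-- The Auslander class `A_C(Sᵒᵖ)`. -/
def AuslanderOp (Y : Type) [AddCommGroup Y] [Module Sᵐᵒᵖ Y] : Prop :=
  (∀ i : ℕ, 1 ≤ i → Subsingleton (TorGrp S Y C i)) ∧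
  (∀ i : ℕ, 1 ≤ i → Subsingleton (ExtGrp Rᵐᵒᵖ C (BT S Y C) i)) ∧
  Function.Bijective (muOp R S C Y)

/-- The Bass class `B_C(Rᵒᵖ)`. -/
def BassOp (B : Type) [AddCommGroup B] [Module Rᵐᵒᵖ B] : Prop :=
  (∀ i : ℕ, 1 ≤ i → Subsingleton (ExtGrp Rᵐᵒᵖ C B i)) ∧
  (∀ i : ℕ, 1 ≤ i → Subsingleton (TorGrp S (C →ₗ[Rᵐᵒᵖ] B) C i)) ∧
  Function.Bijective (nuOp R S C B)

/-- `M` is of type `FP∞`: it admits a projective resolution by finitely generated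
free modules. -/
def IsFPInfty (A : Type) [Ring A] (M : Type) [AddCommGroup M] [Module A M] : Prop :=
  ∃ P : CategoryTheory.ProjectiveResolution (ModuleCat.of A M),
    ∀ n : ℕ, Module.Finite A (P.complex.X n) ∧ Module.Free A (P.complex.X n)

/-- The homothety map `S → Hom_{Rᵒᵖ}(C, C)`. -/
def homothetyS : S → (C →ₗ[Rᵐᵒᵖ] C) := fun s =>
  { toFun := fun c => s • c
    map_add' := fun c c' => smul_add s c c'
    map_smul' := fun r c => by
      show s • (r • c) = r • (s • c)
      rw [smul_comm] }

/-- The homothety map `R → Hom_S(C, C)`. -/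
def homothetyR : R → (C →ₗ[S] C) := fun r =>
  { toFun := fun c => op r • c
    map_add' := fun c c' => smul_add (op r) c c'
    map_smul' := fun s c => by
      show op r • (s • c) = s • (op r • c)
      rw [smul_comm] }

/-- `C` is a semidualizing `(S,R)`-bimodule. -/
structure IsSemidualizing : Prop where
  fp_left : IsFPInfty S C
  fp_right : IsFPInfty Rᵐᵒᵖ C
  homothety_S : Function.Bijective (homothetyS R S C)
  homothety_R : Function.Bijective (homothetyR R S C)
  ext_S : ∀ i : ℕ, 1 ≤ i → Subsingleton (ExtGrp S C C i)
  ext_R : ∀ i : ℕ, 1 ≤ i → Subsingleton (ExtGrp Rᵐᵒᵖ C C i)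

/-- `C` is faithfully semidualizing. -/
structure IsFaithfullySemidualizing extends IsSemidualizing R S C : Prop where
  faithful_S : ∀ (X : Type) [AddCommGroup X] [Module S X],
    (∀ f : C →ₗ[S] X, f = 0) → Subsingleton X
  faithful_R : ∀ (Y : Type) [AddCommGroup Y] [Module Rᵐᵒᵖ Y],
    (∀ f : C →ₗ[Rᵐᵒᵖ] Y, f = 0) → Subsingleton Y

end Semidualizing

end

noncomputable section
section DualityPairs

/-- A class of (bundled) left `R`-modules. -/
abbrev ModClass (R : Type) [Ring R] := Set (ModuleCat.{0} R)

/-- `(M, N)` is a duality pair over `R`: a left `R`-module lies in `M` iff its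
character module lies in `N`, and `N` is closed under direct summands and finite
direct sums. -/
structure IsDualityPair (R : Type) [Ring R] (M : ModClass R) (N : ModClass Rᵐᵒᵖ) : Prop where
  char_mem : ∀ X : ModuleCat.{0} R,
    X ∈ M ↔ ModuleCat.of Rᵐᵒᵖ (CharacterModule X) ∈ N
  summand_closed : ∀ (X Y : ModuleCat.{0} Rᵐᵒᵖ) (i : Y →ₗ[Rᵐᵒᵖ] X) (p : X →ₗ[Rᵐᵒᵖ] Y),
    p.comp i = LinearMap.id → X ∈ N → Y ∈ N
  finsum_closed : ∀ X Y : ModuleCat.{0} Rᵐᵒᵖ,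
    X ∈ N → Y ∈ N → ModuleCat.of Rᵐᵒᵖ (↥X × ↥Y) ∈ N

/-- `(N, M)` is a duality pair over `Rᵒᵖ`: a right `R`-module lies in `N` iff its
character module lies in `M`, and `M` is closed under direct summands and finite
direct sums.  A duality pair `(M, N)` with this additional property is *symmetric*. -/
structure IsDualityPairOp (R : Type) [Ring R] (N : ModClass Rᵐᵒᵖ) (M : ModClass R) : Prop where
  char_mem : ∀ Y : ModuleCat.{0} Rᵐᵒᵖ,
    Y ∈ N ↔ ModuleCat.of R (CharacterModule Y) ∈ M
  summand_closed : ∀ (X Y : ModuleCat.{0} R) (i : Y →ₗ[R] X) (p : X →ₗ[R] Y),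
    p.comp i = LinearMap.id → X ∈ M → Y ∈ M
  finsum_closed : ∀ X Y : ModuleCat.{0} R,
    X ∈ M → Y ∈ M → ModuleCat.of R (↥X × ↥Y) ∈ M

/-- A monomorphism of left `R`-modules is pure if it stays injective after applying
`M ⊗_R -` for every right `R`-module `M`. -/
def IsPureMono (R : Type) [Ring R] {A B : Type} [AddCommGroup A] [Module R A]
    [AddCommGroup B] [Module R B] (f : A →ₗ[R] B) : Prop :=
  Function.Injective f ∧
  ∀ (M : Type) [AddCommGroup M] [Module Rᵐᵒᵖ M],
    Function.Injective (BT.map (M := M) R f)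

end DualityPairs

section Induced
variable (R S : Type) [Ring R] [Ring S]
variable (C : Type) [AddCommGroup C] [Module S C] [Module Rᵐᵒᵖ C]
  [SMulCommClass S Rᵐᵒᵖ C] [SMulCommClass Rᵐᵒᵖ S C]

/-- The induced class `M^C(S)` of left `S`-modules isomorphic to `C ⊗_R A`
with `A` in the Auslander class and in `M`. -/
def inducedMC (Mcl : ModClass R) : ModClass S :=
  {X : ModuleCat.{0} S | ∃ A : ModuleCat.{0} R,
    AuslanderR R S C A ∧ A ∈ Mcl ∧ Nonempty (↥X ≃ₗ[S] BT R C ↥A)}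

/-- The induced class `N^C(Sᵒᵖ)` of right `S`-modules isomorphic to `Hom_{Rᵒᵖ}(C, B)`
with `B` in the Bass class and in `N`. -/
def inducedNC (Ncl : ModClass Rᵐᵒᵖ) : ModClass Sᵐᵒᵖ :=
  {Y : ModuleCat.{0} Sᵐᵒᵖ | ∃ B : ModuleCat.{0} Rᵐᵒᵖ,
    BassOp R S C ↥B ∧ B ∈ Ncl ∧ Nonempty (↥Y ≃ₗ[Sᵐᵒᵖ] (C →ₗ[Rᵐᵒᵖ] ↥B))}

end Induced

section Resolutions
variable (R : Type) [Ring R]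

/-- `ResLen R cl n X` : `X` admits a resolution of length `n` by modules in `cl`. -/
def ResLen (cl : ModClass R) : ℕ → ModuleCat.{0} R → Prop
  | 0, X => X ∈ cl
  | n+1, X => ∃ (Y : ModuleCat.{0} R) (f : ↥Y →ₗ[R] ↥X), Y ∈ cl ∧ Function.Surjective f ∧
      ResLen cl n (ModuleCat.of R (LinearMap.ker f))

/-- `X` has resolution dimension at most `n` with respect to `cl`. -/
def ResDimLE (cl : ModClass R) (n : ℕ) (X : ModuleCat.{0} R) : Prop :=
  ∃ m ≤ n, ResLen R cl m X

/-- `CoresLen R cl n X` : `X` admits a coresolution of length `n` by modules in `cl`. -/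
def CoresLen (cl : ModClass R) : ℕ → ModuleCat.{0} R → Prop
  | 0, X => X ∈ cl
  | n+1, X => ∃ (Y : ModuleCat.{0} R) (f : ↥X →ₗ[R] ↥Y), Y ∈ cl ∧ Function.Injective f ∧
      CoresLen cl n (ModuleCat.of R (↥Y ⧸ LinearMap.range f))

/-- `X` has coresolution dimension at most `n` with respect to `cl`. -/
def CoresDimLE (cl : ModClass R) (n : ℕ) (X : ModuleCat.{0} R) : Prop :=
  ∃ m ≤ n, CoresLen R cl m X

end Resolutions

section Gorenstein
open CategoryTheory
variable (R : Type) [Ring R]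

/-- Exactness of a cochain complex of modules at every spot. -/
def AcyclicComplex (K : CochainComplex (ModuleCat.{0} R) ℤ) : Prop :=
  ∀ n : ℤ, K.ExactAt n

/-- `X` is `(Z, Y)`-Gorenstein injective: `X` is a cycle of an exact complex with
components in `Y` which stays exact under `Hom(Z₀, -)` for every `Z₀ ∈ Z`. -/
def GorInj (Z Y : ModClass R) (X : Type) [AddCommGroup X] [Module R X] : Prop :=
  ∃ K : CochainComplex (ModuleCat.{0} R) ℤ,
    AcyclicComplex R K ∧
    (∀ n : ℤ, K.X n ∈ Y) ∧
    (∀ Z₀ : ModuleCat.{0} R, Z₀ ∈ Z → ∀ n : ℤ,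
      ((((CategoryTheory.preadditiveCoyoneda.obj
        (Opposite.op Z₀)).mapHomologicalComplex _).obj K).ExactAt n)) ∧
    Nonempty (X ≃ₗ[R] LinearMap.ker ((K.d 0 1).hom : ↥(K.X 0) →ₗ[R] ↥(K.X 1)))

end Gorenstein

section GorensteinFlat
open CategoryTheory
variable (S : Type) [Ring S]

/-- `X` is Gorenstein `(Xc, Yc)`-flat : `X` is a cycle of an exact complex with
components in `Xc` which stays exact under `Y₀ ⊗_S -` for every `Y₀ ∈ Yc`. -/
def GorFlat (Xc : ModClass S) (Yc : ModClass Sᵐᵒᵖ) (X : Type) [AddCommGroup X]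
    [Module S X] : Prop :=
  ∃ K : CochainComplex (ModuleCat.{0} S) ℤ,
    AcyclicComplex S K ∧
    (∀ n : ℤ, K.X n ∈ Xc) ∧
    (∀ Y₀ : ModuleCat.{0} Sᵐᵒᵖ, Y₀ ∈ Yc → ∀ n : ℤ,
      ((((btF S ↥Y₀).mapHomologicalComplex _).obj K).ExactAt n)) ∧
    Nonempty (X ≃ₗ[S] LinearMap.ker ((K.d 0 1).hom : ↥(K.X 0) →ₗ[S] ↥(K.X 1)))

end GorensteinFlat

end

noncomputable section
/-- `cl` is closed under extensions. -/
def ExtClosed (R : Type) [Ring R] (cl : ModClass R) : Prop :=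
  ∀ (A B D : Type) [AddCommGroup A] [Module R A] [AddCommGroup B] [Module R B]
    [AddCommGroup D] [Module R D] (f : A →ₗ[R] B) (g : B →ₗ[R] D),
    Function.Injective f → Function.Surjective g →
    LinearMap.range f = LinearMap.ker g →
    ModuleCat.of R A ∈ cl → ModuleCat.of R D ∈ cl → ModuleCat.of R B ∈ cl
end

noncomputable section
/-- Functoriality of the balanced tensor product in the left variable. -/
def BT.mapLeft (R : Type) [Ring R] {M M' : Type} [AddCommGroup M] [Module Rᵐᵒᵖ M]
    [AddCommGroup M'] [Module Rᵐᵒᵖ M'] {N : Type} [AddCommGroup N] [Module R N]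
    (g : M →ₗ[Rᵐᵒᵖ] M') : BT R M N →ₗ[ℤ] BT R M' N := by
  refine Submodule.mapQ _ _
    (TensorProduct.map g.toAddMonoidHom.toIntLinearMap LinearMap.id) ?_
  rw [btRel, Submodule.span_le]
  rintro x ⟨m, r, n, rfl⟩
  have e : TensorProduct.map g.toAddMonoidHom.toIntLinearMap LinearMap.id ((op r • m) ⊗ₜ[ℤ] n - m ⊗ₜ[ℤ] (r • n)) =
      (op r • g m) ⊗ₜ[ℤ] n - g m ⊗ₜ[ℤ] (r • n) := by
    simp [smul_comm]
  exact (congrArg (· ∈ btRel R M' N) e).mpr (Submodule.subset_span ⟨g m, r, n, rfl⟩)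

/-- A left module `F` over a (possibly noncommutative) ring is flat if `- ⊗_R F`
preserves injectivity of maps of right `R`-modules. -/
def IsFlatModule (R : Type) [Ring R] (F : Type) [AddCommGroup F] [Module R F] : Prop :=
  ∀ (M M' : Type) [AddCommGroup M] [Module Rᵐᵒᵖ M] [AddCommGroup M'] [Module Rᵐᵒᵖ M']
    (g : M →ₗ[Rᵐᵒᵖ] M'), Function.Injective g →
    Function.Injective (BT.mapLeft (N := F) R g)
end
noncomputable section StmtAux
open CategoryTheory

theorem subsCongr {α β : Type} (e : α ≃ β) (h : Subsingleton α) : Subsingleton β :=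
  ⟨fun x y => by
    have h1 := @Subsingleton.elim _ h (e.symm x) (e.symm y)
    rw [← e.apply_symm_apply x, ← e.apply_symm_apply y, h1]⟩

/-- Pointwise description of `BT.mapLeft`. -/
theorem BT.mapLeft_mk (R : Type) [Ring R] {M M' : Type} [AddCommGroup M] [Module Rᵐᵒᵖ M]
    [AddCommGroup M'] [Module Rᵐᵒᵖ M'] {N : Type} [AddCommGroup N] [Module R N]
    (g : M →ₗ[Rᵐᵒᵖ] M') (m : M) (n : N) :
    BT.mapLeft R g (BT.mk R m n) = BT.mk R (g m) n := rfl

section TorExtCongr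
variable (R : Type) [Ring R]

/-- Tor is invariant under isomorphism in the right variable. -/
def torCongrRight (M : Type) [AddCommGroup M] [Module Rᵐᵒᵖ M]
    {N N' : Type} [AddCommGroup N] [Module R N] [AddCommGroup N'] [Module R N']
    (e : N ≃ₗ[R] N') (i : ℕ) : TorGrp R M N i ≃ TorGrp R M N' i :=
  (((btF R M).leftDerived i).mapIso e.toModuleIso).addCommGroupIsoToAddEquiv.toEquiv

/-- Ext is invariant under isomorphism in the right variable. -/
def extCongrRight (A : Type) [AddCommGroup A] [Module R A]
    {B B' : Type} [AddCommGroup B] [Module R B] [AddCommGroup B'] [Module R B']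
    (e : B ≃ₗ[R] B') (i : ℕ) : ExtGrp R A B i ≃ ExtGrp R A B' i :=
  ((forget _).mapIso (((Ext ℤ (ModuleCat.{0} R) i).obj
    (Opposite.op (ModuleCat.of R A))).mapIso e.toModuleIso)).toEquiv

variable {M M' : Type} [AddCommGroup M] [Module Rᵐᵒᵖ M] [AddCommGroup M'] [Module Rᵐᵒᵖ M']

/-- The additive equivalence on balanced tensor products induced by an
isomorphism of the left factor. -/
def btMapLeftAddEquiv (g : M ≃ₗ[Rᵐᵒᵖ] M') (N : Type) [AddCommGroup N] [Module R N] :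
    BT R M N ≃+ BT R M' N where
  toFun := BT.mapLeft R g.toLinearMap
  invFun := BT.mapLeft R g.symm.toLinearMap
  left_inv x := by
    have h : (BT.mapLeft R (N := N) g.symm.toLinearMap).comp (BT.mapLeft R g.toLinearMap)
        = LinearMap.id :=
      BT.hom_ext fun m n => by
        show BT.mk R (g.symm (g m)) n = BT.mk R m n
        rw [g.symm_apply_apply]
    exact LinearMap.congr_fun h x
  right_inv x := by
    have h : (BT.mapLeft R (N := N) g.toLinearMap).comp (BT.mapLeft R g.symm.toLinearMap)
        = LinearMap.id :=
      BT.hom_ext fun m n => by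
        show BT.mk R (g (g.symm m)) n = BT.mk R m n
        rw [g.apply_symm_apply]
    exact LinearMap.congr_fun h x
  map_add' := map_add _

/-- The natural isomorphism of tensor functors induced by an isomorphism
of the left factor. -/
def btFNatIso (g : M ≃ₗ[Rᵐᵒᵖ] M') : btF R M ≅ btF R M' :=
  NatIso.ofComponents
    (fun N => (btMapLeftAddEquiv R g ↥N).toAddCommGrpIso)
    (by
      intro X Y f
      have h : (BT.mapLeft R (N := ↥Y) g.toLinearMap).comp (BT.map R f.hom)
          = (BT.map R f.hom).comp (BT.mapLeft R g.toLinearMap) :=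
        BT.hom_ext fun m n => rfl
      ext x
      exact LinearMap.congr_fun h x)

/-- Tor is invariant under isomorphism in the left variable. -/
def torCongrLeft (g : M ≃ₗ[Rᵐᵒᵖ] M') (N : Type) [AddCommGroup N] [Module R N] (i : ℕ) :
    TorGrp R M N i ≃ TorGrp R M' N i :=
  (Iso.addCommGroupIsoToAddEquiv
    { hom := (NatTrans.leftDerived (btFNatIso R g).hom i).app (ModuleCat.of R N)
      inv := (NatTrans.leftDerived (btFNatIso R g).inv i).app (ModuleCat.of R N)
      hom_inv_id := by
        rw [← NatTrans.comp_app, ← NatTrans.leftDerived_comp, Iso.hom_inv_id,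
          NatTrans.leftDerived_id, NatTrans.id_app]
      inv_hom_id := by
        rw [← NatTrans.comp_app, ← NatTrans.leftDerived_comp, Iso.inv_hom_id,
          NatTrans.leftDerived_id, NatTrans.id_app] }).toEquiv

end TorExtCongr

section ClassClosure
variable {R : Type} [Ring R]

/-- Character modules are contravariantly functorial: the equivalence induced by a
linear equivalence. -/
def charCongrR {X X' : Type} [AddCommGroup X] [Module R X] [AddCommGroup X'] [Module R X']
    (e : X ≃ₗ[R] X') : CharacterModule X' ≃ₗ[Rᵐᵒᵖ] CharacterModule X where
  toFun f := f.comp e.toLinearMap.toAddMonoidHom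
  invFun g := g.comp e.symm.toLinearMap.toAddMonoidHom
  left_inv f := DFunLike.ext _ _ fun a => congrArg f (e.apply_symm_apply a)
  right_inv g := DFunLike.ext _ _ fun a => congrArg g (e.symm_apply_apply a)
  map_add' f g := rfl
  map_smul' r f := DFunLike.ext _ _ fun a => congrArg f (e.map_smul r.unop a).symm

theorem ncl_iso_closed {Mcl : ModClass R} {Ncl : ModClass Rᵐᵒᵖ}
    (hdp : IsDualityPair R Mcl Ncl) {X Y : ModuleCat.{0} Rᵐᵒᵖ}
    (e : ↥X ≃ₗ[Rᵐᵒᵖ] ↥Y) (hX : X ∈ Ncl) : Y ∈ Ncl :=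
  hdp.summand_closed X Y e.symm.toLinearMap e.toLinearMap
    (LinearMap.ext fun y => e.apply_symm_apply y) hX

theorem mcl_iso_closed {Mcl : ModClass R} {Ncl : ModClass Rᵐᵒᵖ}
    (hdp : IsDualityPair R Mcl Ncl) {X Y : ModuleCat.{0} R}
    (e : ↥X ≃ₗ[R] ↥Y) (hX : X ∈ Mcl) : Y ∈ Mcl := by
  rw [hdp.char_mem] at hX ⊢
  exact hdp.summand_closed _ _ (charCongrR e).toLinearMap (charCongrR e).symm.toLinearMap
    (by ext f : 1; exact (charCongrR e).symm_apply_apply f) hX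

end ClassClosure

section LinMaps
variable (R S : Type) [Ring R] [Ring S]
variable (C : Type) [AddCommGroup C] [Module S C] [Module Rᵐᵒᵖ C]
  [SMulCommClass S Rᵐᵒᵖ C] [SMulCommClass Rᵐᵒᵖ S C]

theorem btMapS_smul {A A' : Type} [AddCommGroup A] [Module R A] [AddCommGroup A'] [Module R A']
    (f : A →ₗ[R] A') (s : S) (x : BT R C A) :
    BT.map R f (s • x) = s • BT.map R f x := by
  induction x using BT.ind with
  | h0 => simp
  | hmk c a => rw [BT.smul_mk, BT.map_mk, BT.map_mk, BT.smul_mk]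
  | hadd x y hx hy => rw [smul_add, map_add, map_add, smul_add, hx, hy]

/-- `C ⊗_R -` on maps, as an `S`-linear map. -/
def btMapS {A A' : Type} [AddCommGroup A] [Module R A] [AddCommGroup A'] [Module R A']
    (f : A →ₗ[R] A') : BT R C A →ₗ[S] BT R C A' where
  toFun := BT.map R f
  map_add' := map_add _
  map_smul' := btMapS_smul R S C f

/-- `C ⊗_R -` on isomorphisms, as an `S`-linear equivalence. -/
def btCongrS {A A' : Type} [AddCommGroup A] [Module R A] [AddCommGroup A'] [Module R A']
    (e : A ≃ₗ[R] A') : BT R C A ≃ₗ[S] BT R C A' :=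
  LinearEquiv.ofLinear (btMapS R S C e.toLinearMap) (btMapS R S C e.symm.toLinearMap)
    (LinearMap.ext fun x =>
      show BT.map R e.toLinearMap (BT.map R e.symm.toLinearMap x) = x from
      LinearMap.congr_fun (BT.hom_ext (f := (BT.map R (M := C) e.toLinearMap).comp
        (BT.map R e.symm.toLinearMap)) (g := LinearMap.id) fun m n => by
          show BT.mk R m (e (e.symm n)) = BT.mk R m n
          rw [e.apply_symm_apply]) x)
    (LinearMap.ext fun x =>
      show BT.map R e.symm.toLinearMap (BT.map R e.toLinearMap x) = x from
      LinearMap.congr_fun (BT.hom_ext (f := (BT.map R (M := C) e.symm.toLinearMap).comp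
        (BT.map R e.toLinearMap)) (g := LinearMap.id) fun m n => by
          show BT.mk R m (e.symm (e n)) = BT.mk R m n
          rw [e.symm_apply_apply]) x)

theorem btMapLeftR_smul {Y Y' : Type} [AddCommGroup Y] [Module Sᵐᵒᵖ Y] [AddCommGroup Y']
    [Module Sᵐᵒᵖ Y'] (g : Y →ₗ[Sᵐᵒᵖ] Y') (r : Rᵐᵒᵖ) (x : BT S Y C) :
    BT.mapLeft S g (r • x) = r • BT.mapLeft S g x := by
  induction x using BT.ind with
  | h0 => simp
  | hmk y c => rw [BT.smul_mk_right, BT.mapLeft_mk, BT.mapLeft_mk, BT.smul_mk_right]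
  | hadd x y hx hy => rw [smul_add, map_add, map_add, smul_add, hx, hy]

/-- `- ⊗_S C` on maps, as an `Rᵒᵖ`-linear map. -/
def btMapLeftR {Y Y' : Type} [AddCommGroup Y] [Module Sᵐᵒᵖ Y] [AddCommGroup Y'] [Module Sᵐᵒᵖ Y']
    (g : Y →ₗ[Sᵐᵒᵖ] Y') : BT S Y C →ₗ[Rᵐᵒᵖ] BT S Y' C where
  toFun := BT.mapLeft S g
  map_add' := map_add _
  map_smul' := btMapLeftR_smul R S C g

/-- `- ⊗_S C` on isomorphisms, as an `Rᵒᵖ`-linear equivalence. -/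
def btCongrLeftR {Y Y' : Type} [AddCommGroup Y] [Module Sᵐᵒᵖ Y] [AddCommGroup Y']
    [Module Sᵐᵒᵖ Y'] (e : Y ≃ₗ[Sᵐᵒᵖ] Y') : BT S Y C ≃ₗ[Rᵐᵒᵖ] BT S Y' C :=
  LinearEquiv.ofLinear (btMapLeftR R S C e.toLinearMap) (btMapLeftR R S C e.symm.toLinearMap)
    (LinearMap.ext fun x =>
      show BT.mapLeft S e.toLinearMap (BT.mapLeft S e.symm.toLinearMap x) = x from
      LinearMap.congr_fun (BT.hom_ext (f := (BT.mapLeft S (N := C) e.toLinearMap).comp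
        (BT.mapLeft S e.symm.toLinearMap)) (g := LinearMap.id) fun m n => by
          show BT.mk S (e (e.symm m)) n = BT.mk S m n
          rw [e.apply_symm_apply]) x)
    (LinearMap.ext fun x =>
      show BT.mapLeft S e.symm.toLinearMap (BT.mapLeft S e.toLinearMap x) = x from
      LinearMap.congr_fun (BT.hom_ext (f := (BT.mapLeft S (N := C) e.symm.toLinearMap).comp
        (BT.mapLeft S e.toLinearMap)) (g := LinearMap.id) fun m n => by
          show BT.mk S (e.symm (e m)) n = BT.mk S m n
          rw [e.symm_apply_apply]) x)

/-- `Hom_S(C,-)` on isomorphisms, as an `R`-linear equivalence. -/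
def homCongrS {X Z : Type} [AddCommGroup X] [Module S X] [AddCommGroup Z] [Module S Z]
    (e : X ≃ₗ[S] Z) : (C →ₗ[S] X) ≃ₗ[R] (C →ₗ[S] Z) where
  toFun f := e.toLinearMap.comp f
  invFun g := e.symm.toLinearMap.comp g
  left_inv f := LinearMap.ext fun c => e.symm_apply_apply _
  right_inv g := LinearMap.ext fun c => e.apply_symm_apply _
  map_add' f g := LinearMap.ext fun c => map_add e _ _
  map_smul' r f := LinearMap.ext fun c => rfl

/-- `Hom_{Rᵒᵖ}(C,-)` on isomorphisms, as an `Sᵒᵖ`-linear equivalence. -/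
def homCongrOp {B B' : Type} [AddCommGroup B] [Module Rᵐᵒᵖ B] [AddCommGroup B']
    [Module Rᵐᵒᵖ B'] (e : B ≃ₗ[Rᵐᵒᵖ] B') : (C →ₗ[Rᵐᵒᵖ] B) ≃ₗ[Sᵐᵒᵖ] (C →ₗ[Rᵐᵒᵖ] B') where
  toFun f := e.toLinearMap.comp f
  invFun g := e.symm.toLinearMap.comp g
  left_inv f := LinearMap.ext fun c => e.symm_apply_apply _
  right_inv g := LinearMap.ext fun c => e.apply_symm_apply _
  map_add' f g := LinearMap.ext fun c => map_add e _ _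
  map_smul' s f := LinearMap.ext fun c => rfl

/-- `muR` as an `R`-linear map. -/
def muRLinear (A : Type) [AddCommGroup A] [Module R A] : A →ₗ[R] (C →ₗ[S] BT R C A) where
  toFun := muR R S C A
  map_add' a a' := LinearMap.ext fun c => BT.mk_add_right c a a'
  map_smul' r a := LinearMap.ext fun c => (BT.mk_rel c r a).symm

/-- `muOp` as an `Sᵒᵖ`-linear map. -/
def muOpLinear (Y : Type) [AddCommGroup Y] [Module Sᵐᵒᵖ Y] :
    Y →ₗ[Sᵐᵒᵖ] (C →ₗ[Rᵐᵒᵖ] BT S Y C) where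
  toFun := muOp R S C Y
  map_add' y y' := LinearMap.ext fun c => BT.mk_add_left y y' c
  map_smul' s y := LinearMap.ext fun c => by
    have h := BT.mk_rel (R := S) y s.unop c
    rw [op_unop] at h
    exact h

theorem nuS_mk (X : Type) [AddCommGroup X] [Module S X] (c : C) (f : C →ₗ[S] X) :
    nuS R S C X (BT.mk R c f) = f c := rfl

theorem nuS_zero (X : Type) [AddCommGroup X] [Module S X] : nuS R S C X 0 = 0 := by
  unfold nuS
  exact map_zero _

theorem nuS_add (X : Type) [AddCommGroup X] [Module S X] (x y : BT R C (C →ₗ[S] X)) :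
    nuS R S C X (x + y) = nuS R S C X x + nuS R S C X y := by
  unfold nuS
  exact map_add _ x y

theorem nuOp_mk (B : Type) [AddCommGroup B] [Module Rᵐᵒᵖ B] (f : C →ₗ[Rᵐᵒᵖ] B) (c : C) :
    nuOp R S C B (BT.mk S f c) = f c := rfl

theorem nuOp_zero (B : Type) [AddCommGroup B] [Module Rᵐᵒᵖ B] : nuOp R S C B 0 = 0 := by
  unfold nuOp
  exact map_zero _

theorem nuOp_add (B : Type) [AddCommGroup B] [Module Rᵐᵒᵖ B]
    (x y : BT S (C →ₗ[Rᵐᵒᵖ] B) C) :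
    nuOp R S C B (x + y) = nuOp R S C B x + nuOp R S C B y := by
  unfold nuOp
  exact map_add _ x y

theorem nuOp_smul (B : Type) [AddCommGroup B] [Module Rᵐᵒᵖ B]
    (r : Rᵐᵒᵖ) (x : BT S (C →ₗ[Rᵐᵒᵖ] B) C) :
    nuOp R S C B (r • x) = r • nuOp R S C B x := by
  induction x using BT.ind with
  | h0 => rw [smul_zero, nuOp_zero, smul_zero]
  | hmk f c => rw [BT.smul_mk_right, nuOp_mk, nuOp_mk, map_smul]
  | hadd x y hx hy => rw [smul_add, nuOp_add, nuOp_add, smul_add, hx, hy]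

/-- `nuOp` as an `Rᵒᵖ`-linear map. -/
def nuOpLinear (B : Type) [AddCommGroup B] [Module Rᵐᵒᵖ B] :
    BT S (C →ₗ[Rᵐᵒᵖ] B) C →ₗ[Rᵐᵒᵖ] B where
  toFun := nuOp R S C B
  map_add' := nuOp_add R S C B
  map_smul' := nuOp_smul R S C B

/-- Transfer of the Auslander class along an isomorphism. -/
theorem auslanderR_congr {A A' : Type} [AddCommGroup A] [Module R A] [AddCommGroup A']
    [Module R A'] (e : A ≃ₗ[R] A') (hA : AuslanderR R S C A) : AuslanderR R S C A' := by
  obtain ⟨h1, h2, h3⟩ := hA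
  refine ⟨fun i hi => subsCongr (torCongrRight R C e i) (h1 i hi),
    fun i hi => subsCongr (extCongrRight S C (btCongrS R S C e) i) (h2 i hi), ?_⟩
  have key : muR R S C A' =
      ⇑(homCongrS R S C (btCongrS R S C e)) ∘ (muR R S C A) ∘ ⇑e.symm := by
    funext a'
    exact LinearMap.ext fun c => by
      show BT.mk R c a' = BT.map R e.toLinearMap (BT.mk R c (e.symm a'))
      rw [BT.map_mk]
      exact congrArg (BT.mk R c) (e.apply_symm_apply a').symm
  rw [key]
  exact (homCongrS R S C (btCongrS R S C e)).bijective.comp (h3.comp e.symm.bijective)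

/-- Transfer of the Bass class along an isomorphism. -/
theorem bassOp_congr {B B' : Type} [AddCommGroup B] [Module Rᵐᵒᵖ B] [AddCommGroup B']
    [Module Rᵐᵒᵖ B'] (e : B ≃ₗ[Rᵐᵒᵖ] B') (hB : BassOp R S C B) : BassOp R S C B' := by
  obtain ⟨h1, h2, h3⟩ := hB
  refine ⟨fun i hi => subsCongr (extCongrRight Rᵐᵒᵖ C e i) (h1 i hi),
    fun i hi => subsCongr (torCongrLeft S (homCongrOp R S C e) C i) (h2 i hi), ?_⟩
  have key : nuOp R S C B' =
      ⇑e ∘ nuOp R S C B ∘ ⇑(btCongrLeftR R S C (homCongrOp R S C e.symm)) := by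
    funext t
    induction t using BT.ind with
    | h0 =>
      show nuOp R S C B' 0 = e (nuOp R S C B (btCongrLeftR R S C (homCongrOp R S C e.symm) 0))
      rw [nuOp_zero, map_zero, nuOp_zero, map_zero]
    | hmk f c =>
      show f c = e (e.symm (f c))
      rw [e.apply_symm_apply]
    | hadd x y hx hy =>
      show nuOp R S C B' (x + y) =
        e (nuOp R S C B (btCongrLeftR R S C (homCongrOp R S C e.symm) (x + y)))
      rw [nuOp_add, map_add, nuOp_add, map_add, hx, hy]
      rfl
  rw [key]
  exact e.bijective.comp (h3.comp (btCongrLeftR R S C (homCongrOp R S C e.symm)).bijective)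

end LinMaps
end StmtAux

set_option synthInstance.maxHeartbeats 1000000
set_option maxHeartbeats 1600000

/-- The restricted Foxby equivalences: `C ⊗_R -` is an equivalence from
`A_C(R) ∩ M` to `M^C(S)` with quasi-inverse `Hom_S(C, -)`, and `- ⊗_S C` is an
equivalence from `N^C(Sᵒᵖ)` to `B_C(Rᵒᵖ) ∩ N` with quasi-inverse `Hom_{Rᵒᵖ}(C, -)`,
expressed on objects with unit and counit bijective. -/
theorem stmt12 (R S : Type) [Ring R] [Ring S]
    (C : Type) [AddCommGroup C] [Module S C] [Module Rᵐᵒᵖ C]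
    [SMulCommClass S Rᵐᵒᵖ C] [SMulCommClass Rᵐᵒᵖ S C]
    (hC : IsSemidualizing R S C)
    (Mcl : ModClass R) (Ncl : ModClass Rᵐᵒᵖ) (hdp : IsDualityPair R Mcl Ncl) :
    (∀ A : ModuleCat.{0} R, AuslanderR R S C ↥A → A ∈ Mcl →
      ModuleCat.of S (BT R C ↥A) ∈ inducedMC R S C Mcl ∧
      Function.Bijective (muR R S C ↥A)) ∧
    (∀ X : ModuleCat.{0} S, X ∈ inducedMC R S C Mcl →
      AuslanderR R S C (C →ₗ[S] ↥X) ∧ ModuleCat.of R (C →ₗ[S] ↥X) ∈ Mcl ∧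
      Function.Bijective (nuS R S C ↥X)) ∧
    (∀ Y : ModuleCat.{0} Sᵐᵒᵖ, Y ∈ inducedNC R S C Ncl →
      BassOp R S C (BT S ↥Y C) ∧ ModuleCat.of Rᵐᵒᵖ (BT S ↥Y C) ∈ Ncl ∧
      Function.Bijective (muOp R S C ↥Y)) ∧
    (∀ B : ModuleCat.{0} Rᵐᵒᵖ, BassOp R S C ↥B → B ∈ Ncl →
      ModuleCat.of Sᵐᵒᵖ (C →ₗ[Rᵐᵒᵖ] ↥B) ∈ inducedNC R S C Ncl ∧
      Function.Bijective (nuOp R S C ↥B)) := by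
  refine ⟨?_, ?_, ?_, ?_⟩
  · intro A hA hAM
    exact ⟨⟨A, hA, hAM, ⟨LinearEquiv.refl S _⟩⟩, hA.2.2⟩
  · rintro X ⟨A, hA, hAM, ⟨e⟩⟩
    have hmu : Function.Bijective (muR R S C ↥A) := hA.2.2
    set μ : ↥A ≃ₗ[R] (C →ₗ[S] BT R C ↥A) :=
      LinearEquiv.ofBijective (muRLinear R S C ↥A) hmu with hμ
    set ρ : ↥A ≃ₗ[R] (C →ₗ[S] ↥X) := μ.trans (homCongrS R S C e.symm) with hρ
    have tri : ∀ t : BT R C ↥A, nuS R S C (BT R C ↥A) (btCongrS R S C μ t) = t := by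
      intro t
      induction t using BT.ind with
      | h0 => rw [map_zero, nuS_zero]
      | hmk c a => rfl
      | hadd x y hx hy => rw [map_add, nuS_add, hx, hy]
    have hnuZ : Function.Bijective (nuS R S C (BT R C ↥A)) := by
      have hfun : nuS R S C (BT R C ↥A) = ⇑(btCongrS R S C μ).symm := by
        funext z
        conv_lhs => rw [← (btCongrS R S C μ).apply_symm_apply z]
        rw [tri]
      rw [hfun]
      exact (btCongrS R S C μ).symm.bijective
    have key : nuS R S C ↥X =
        ⇑e.symm ∘ nuS R S C (BT R C ↥A) ∘ ⇑(btCongrS R S C (homCongrS R S C e)) := by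
      funext t
      induction t using BT.ind with
      | h0 =>
        show nuS R S C ↥X 0 =
          e.symm (nuS R S C (BT R C ↥A) (btCongrS R S C (homCongrS R S C e) 0))
        rw [nuS_zero, map_zero, nuS_zero, map_zero]
      | hmk c f =>
        show f c = e.symm (e (f c))
        rw [e.symm_apply_apply]
      | hadd x y hx hy =>
        show nuS R S C ↥X (x + y) =
          e.symm (nuS R S C (BT R C ↥A) (btCongrS R S C (homCongrS R S C e) (x + y)))
        rw [nuS_add, map_add, nuS_add, map_add, hx, hy]
        rfl
    refine ⟨auslanderR_congr R S C ρ hA,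
      mcl_iso_closed hdp (Y := ModuleCat.of R (C →ₗ[S] ↥X)) ρ hAM, ?_⟩
    rw [key]
    exact e.symm.bijective.comp (hnuZ.comp (btCongrS R S C (homCongrS R S C e)).bijective)
  · rintro Y ⟨B, hB, hBN, ⟨e⟩⟩
    have hnu : Function.Bijective (nuOp R S C ↥B) := hB.2.2
    set ν : BT S (C →ₗ[Rᵐᵒᵖ] ↥B) C ≃ₗ[Rᵐᵒᵖ] ↥B :=
      LinearEquiv.ofBijective (nuOpLinear R S C ↥B) hnu with hν
    set φ : BT S ↥Y C ≃ₗ[Rᵐᵒᵖ] ↥B := (btCongrLeftR R S C e).trans ν with hφ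
    have tri : ∀ f : C →ₗ[Rᵐᵒᵖ] ↥B,
        homCongrOp R S C ν (muOp R S C (C →ₗ[Rᵐᵒᵖ] ↥B) f) = f :=
      fun f => LinearMap.ext fun c => rfl
    have hmuY0 : Function.Bijective (muOp R S C (C →ₗ[Rᵐᵒᵖ] ↥B)) := by
      have hfun : muOp R S C (C →ₗ[Rᵐᵒᵖ] ↥B) = ⇑(homCongrOp R S C ν).symm := by
        funext f
        have h1 := congrArg (⇑(homCongrOp R S C ν).symm) (tri f)
        rwa [LinearEquiv.symm_apply_apply] at h1
      rw [hfun]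
      exact (homCongrOp R S C ν).symm.bijective
    have key : muOp R S C ↥Y = ⇑(homCongrOp R S C (btCongrLeftR R S C e.symm)) ∘
        muOp R S C (C →ₗ[Rᵐᵒᵖ] ↥B) ∘ ⇑e := by
      funext y
      exact LinearMap.ext fun c => by
        show BT.mk S y c = BT.mk S (e.symm (e y)) c
        exact congrArg (fun z => BT.mk S z c) (e.symm_apply_apply y).symm
    refine ⟨bassOp_congr R S C φ.symm hB,
      ncl_iso_closed hdp (Y := ModuleCat.of Rᵐᵒᵖ (BT S ↥Y C)) φ.symm hBN, ?_⟩
    rw [key]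
    exact (homCongrOp R S C (btCongrLeftR R S C e.symm)).bijective.comp
      (hmuY0.comp e.bijective)
  · intro B hB hBN
    exact ⟨⟨B, hB, hBN, ⟨LinearEquiv.refl Sᵐᵒᵖ _⟩⟩, hB.2.2⟩
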